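/- Let A be an n×n matrix with entries chosen independently and uniformly from {-⌊λ/2⌋, ..., ⌈λ/2⌉} (a set of λ+1 contiguous integers). For any prime p, the expected number of invariant factors of A divisible by p is at most 4. Moreover, if p ≥ λ+1, this expectation is at most 1.18. -/

import Mathlib

open Finset Submodule Module Matrix


set_option maxHeartbeats 1000000 in
set_option synthInstance.maxHeartbeats 400000 in
open scoped Classical in
theorem count_le' {F : Type*} [Field F] {m r : ℕ} (φ : Fin m → F) (c : Fin m → Fin r)
    (hinj : ∀ a b : Fin m, φ a = φ b → c a = c b → a = b) :
    ∀ (n : ℕ) (V : Submodule F (Fin n → F)),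
    (Finset.univ.filter (fun x : Fin n → Fin m => (fun i => φ (x i)) ∈ V)).card
      ≤ m ^ (finrank F V) * r ^ (n - finrank F V) := by
  intro n
  induction n with
  | zero =>
    intro V
    have h0 : finrank F V = 0 := by
      have h := Submodule.finrank_le V
      simpa [Module.finrank_pi] using h
    rw [h0]
    have h1 := Finset.card_filter_le (Finset.univ : Finset (Fin 0 → Fin m)) 
      (fun x => (fun i => φ (x i)) ∈ V)
    have h2 : (Finset.univ : Finset (Fin 0 → Fin m)).card = 1 := by
      rw [Finset.card_univ]
      simp
    simpa [h2] using h1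
  | succ n ih =>
    intro V
    have hπdef : ∃ π : (Fin (n+1) → F) →ₗ[F] (Fin n → F), π = LinearMap.funLeft F F Fin.castSucc := ⟨_, rfl⟩
    obtain ⟨π, hπ⟩ := hπdef
    have hfdef : ∃ f : V →ₗ[F] (Fin n → F), f = π.comp V.subtype := ⟨_, rfl⟩
    obtain ⟨f, hf⟩ := hfdef
    have hfapp : ∀ (v : V) (i : Fin n), f v i = (v : Fin (n+1) → F) (Fin.castSucc i) := by
      intro v i; rw [hf, hπ]; rfl
    obtain ⟨W, hW⟩ : ∃ W : Submodule F (Fin n → F), W = LinearMap.range f := ⟨_, rfl⟩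
    have hrange : ∀ x : Fin (n+1) → Fin m, ((fun i => φ (x i)) ∈ V) →
        (fun i => φ (x (Fin.castSucc i))) ∈ W := by
      intro x hx
      rw [hW]; exact ⟨⟨_, hx⟩, by funext i; rw [hfapp]⟩
    have hrn : finrank F W + finrank F (LinearMap.ker f) = finrank F V := by
      rw [hW]; exact LinearMap.finrank_range_add_finrank_ker f
    have hWle : finrank F W ≤ n := by
      have h := Submodule.finrank_le W
      simpa [Module.finrank_pi] using h
    have hcoord : ∀ z : Fin (n+1) → F, ∀ (hzV : z ∈ V), (⟨z, hzV⟩ : V) ∈ LinearMap.ker f →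
        ∀ i : Fin n, z (Fin.castSucc i) = 0 := by
      intro z hzV hzk i
      have h0 : f ⟨z, hzV⟩ = 0 := hzk
      have h1 := congrFun h0 i
      rw [hfapp] at h1
      simpa using h1
    have hker_le : finrank F (LinearMap.ker f) ≤ 1 := by
      by_cases hbot : LinearMap.ker f = ⊥
      · rw [hbot]
        simp
      · obtain ⟨x, hxk, hx0⟩ := Submodule.ne_bot_iff _ |>.mp hbot
        obtain ⟨xv, hxV⟩ := x
        have hxlast : xv (Fin.last n) ≠ 0 := by
          intro h
          apply hx0
          apply Subtype.ext
          funext j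
          induction j using Fin.lastCases with
          | last => exact h
          | cast i => exact hcoord xv hxV hxk i
        apply finrank_le_one (⟨⟨xv, hxV⟩, hxk⟩ : LinearMap.ker f)
        rintro ⟨⟨wv, hwV⟩, hwk⟩
        refine ⟨wv (Fin.last n) * (xv (Fin.last n))⁻¹, ?_⟩
        apply Subtype.ext
        apply Subtype.ext
        funext j
        have hsmul : ∀ (cc : F) (j : Fin (n+1)),
            ((((cc • (⟨⟨xv, hxV⟩, hxk⟩ : LinearMap.ker f)) : LinearMap.ker f) : V) : Fin (n+1) → F) j
              = cc * xv j := by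
          intro cc j
          rfl
        induction j using Fin.lastCases with
        | last =>
          show _ = wv (Fin.last n)
          rw [hsmul]
          field_simp
        | cast i =>
          show _ = wv (Fin.castSucc i)
          rw [hsmul, hcoord xv hxV hxk i, hcoord wv hwV hwk i, mul_zero]
    obtain ⟨T, hT⟩ : ∃ T : Finset (Fin n → Fin m), T = Finset.univ.filter (fun y : Fin n → Fin m => (fun i => φ (y i)) ∈ W) := ⟨_, rfl⟩
    have hTb := ih W
    rw [← hT] at hTb
    have hkr : finrank F (LinearMap.ker f) = 0 ∨ finrank F (LinearMap.ker f) = 1 :=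
      Nat.le_one_iff_eq_zero_or_eq_one.mp hker_le
    rcases hkr with hk | hk
    · -- ker trivial
      have hbot : LinearMap.ker f = ⊥ := Submodule.finrank_eq_zero.mp hk
      have hfi : Function.Injective f := LinearMap.ker_eq_bot.mp hbot
      have hd : finrank F V = finrank F W := by rw [← hrn, hk]; exact Nat.add_zero _
      have hcard : (Finset.univ.filter
          (fun x : Fin (n+1) → Fin m => (fun i => φ (x i)) ∈ V)).card
          ≤ (T ×ˢ (Finset.univ : Finset (Fin r))).card := by
        apply Finset.card_le_card_of_injOn
          (fun x => (fun i => x (Fin.castSucc i), c (x (Fin.last n))))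
        · intro x hx
          simp only [Finset.mem_coe, Finset.mem_filter, Finset.mem_univ, true_and] at hx
          simp only [Finset.mem_coe, Finset.mem_product, Finset.mem_univ, and_true, hT,
            Finset.mem_filter, true_and]
          exact hrange x hx
        · intro x hx y hy hxy
          simp only [Finset.mem_coe, Finset.mem_filter, Finset.mem_univ, true_and] at hx hy
          simp only [Prod.mk.injEq] at hxy
          obtain ⟨h1, h2⟩ := hxy
          have hfeq : f ⟨_, hx⟩ = f ⟨_, hy⟩ := by
            funext i
            rw [hfapp, hfapp]
            exact congrArg φ (congrFun h1 i)
          have hVeq := hfi hfeq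
          have hφ : ∀ i, φ (x i) = φ (y i) := fun i =>
            congrFun (congrArg Subtype.val hVeq) i
          funext j
          induction j using Fin.lastCases with
          | last => exact hinj _ _ (hφ _) h2
          | cast i => exact congrFun h1 i
      rw [Finset.card_product, Finset.card_univ, Fintype.card_fin] at hcard
      refine hcard.trans ?_
      have hle2 : T.card * r ≤ (m ^ finrank F W * r ^ (n - finrank F W)) * r :=
        Nat.mul_le_mul_right _ hTb
      refine hle2.trans_eq ?_
      rw [hd]
      have hsub : n + 1 - finrank F W = (n - finrank F W) + 1 := Nat.succ_sub hWle
      rw [hsub, pow_succ]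
      ring
    · -- ker dim 1
      have hd : finrank F V = finrank F W + 1 := by rw [← hrn, hk]
      have hcard : (Finset.univ.filter
          (fun x : Fin (n+1) → Fin m => (fun i => φ (x i)) ∈ V)).card
          ≤ (T ×ˢ (Finset.univ : Finset (Fin m))).card := by
        apply Finset.card_le_card_of_injOn
          (fun x => (fun i => x (Fin.castSucc i), x (Fin.last n)))
        · intro x hx
          simp only [Finset.mem_coe, Finset.mem_filter, Finset.mem_univ, true_and] at hx
          simp only [Finset.mem_coe, Finset.mem_product, Finset.mem_univ, and_true, hT,
            Finset.mem_filter, true_and]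
          exact hrange x hx
        · intro x hx y hy hxy
          simp only [Prod.mk.injEq] at hxy
          obtain ⟨h1, h2⟩ := hxy
          funext j
          induction j using Fin.lastCases with
          | last => exact h2
          | cast i => exact congrFun h1 i
      rw [Finset.card_product, Finset.card_univ, Fintype.card_fin] at hcard
      refine hcard.trans ?_
      have hle2 : T.card * m ≤ (m ^ finrank F W * r ^ (n - finrank F W)) * m :=
        Nat.mul_le_mul_right _ hTb
      refine hle2.trans_eq ?_
      rw [hd]
      have hsub : n + 1 - (finrank F W + 1) = n - finrank F W := Nat.succ_sub_succ n (finrank F W)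
      rw [hsub, pow_succ]
      ring


set_option maxHeartbeats 1000000 in
open scoped Classical in
theorem rank_lower {F : Type*} [Field F] {n : ℕ} (A : Matrix (Fin n) (Fin n) F) :
    n ≤ A.rank + (Finset.univ.filter (fun k : Fin n =>
      Aᵀ k ∈ Submodule.span F (Aᵀ '' {j : Fin n | (j:ℕ) < (k:ℕ)}))).card := by
  have key : ∀ K : ℕ, K ≤ n →
      K ≤ finrank F (Submodule.span F (Aᵀ '' {j : Fin n | (j:ℕ) < K}))
        + (Finset.univ.filter (fun k : Fin n => (k:ℕ) < K ∧
            Aᵀ k ∈ Submodule.span F (Aᵀ '' {j : Fin n | (j:ℕ) < (k:ℕ)}))).card := by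
    intro K
    induction K with
    | zero => intro _; exact Nat.zero_le _
    | succ K ihK =>
      intro hK
      have hKn : K < n := hK
      have hK' : K ≤ n := Nat.le_of_lt hKn
      have ih := ihK hK'
      set j0 : Fin n := ⟨K, hKn⟩ with hj0
      have hsetins : {j : Fin n | (j:ℕ) < K+1} = insert j0 {j : Fin n | (j:ℕ) < K} := by
        ext j
        simp only [Set.mem_setOf_eq, Set.mem_insert_iff, Fin.ext_iff, hj0]
        omega
      have himg : Aᵀ '' {j : Fin n | (j:ℕ) < K+1}
          = insert (Aᵀ j0) (Aᵀ '' {j : Fin n | (j:ℕ) < K}) := by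
        rw [hsetins]; exact Set.image_insert_eq
      have hmono : finrank F (Submodule.span F (Aᵀ '' {j : Fin n | (j:ℕ) < K}))
          ≤ finrank F (Submodule.span F (Aᵀ '' {j : Fin n | (j:ℕ) < K+1})) := by
        apply Submodule.finrank_mono
        apply Submodule.span_mono
        apply Set.image_mono
        intro j hj
        simp only [Set.mem_setOf_eq] at hj ⊢
        omega
      by_cases hmem : Aᵀ j0 ∈ Submodule.span F (Aᵀ '' {j : Fin n | (j:ℕ) < K})
      · have hfil : Finset.univ.filter (fun k : Fin n => (k:ℕ) < K+1 ∧
            Aᵀ k ∈ Submodule.span F (Aᵀ '' {j : Fin n | (j:ℕ) < (k:ℕ)}))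
            = insert j0 (Finset.univ.filter (fun k : Fin n => (k:ℕ) < K ∧
            Aᵀ k ∈ Submodule.span F (Aᵀ '' {j : Fin n | (j:ℕ) < (k:ℕ)}))) := by
          ext k
          simp only [Finset.mem_filter, Finset.mem_univ, true_and, Finset.mem_insert]
          constructor
          · rintro ⟨hlt, hsp⟩
            rcases Nat.lt_succ_iff_lt_or_eq.mp hlt with h | h
            · exact Or.inr ⟨h, hsp⟩
            · left; exact Fin.ext h
          · rintro (rfl | ⟨hlt, hsp⟩)
            · exact ⟨Nat.lt_succ_self _, hmem⟩
            · exact ⟨Nat.lt_succ_of_lt hlt, hsp⟩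
        have hnotmem : j0 ∉ Finset.univ.filter (fun k : Fin n => (k:ℕ) < K ∧
            Aᵀ k ∈ Submodule.span F (Aᵀ '' {j : Fin n | (j:ℕ) < (k:ℕ)})) := by
          simp [hj0]
        rw [hfil, Finset.card_insert_of_notMem hnotmem]
        omega
      · have hm0 : Aᵀ j0 ≠ 0 := fun h => hmem (h ▸ Submodule.zero_mem _)
        have hinf : (Submodule.span F {Aᵀ j0} ⊓
            Submodule.span F (Aᵀ '' {j : Fin n | (j:ℕ) < K})) = ⊥ := by
          rw [eq_bot_iff]
          rintro v hv
          rw [Submodule.mem_inf] at hv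
          obtain ⟨hv1, hv2⟩ := hv
          obtain ⟨cc, rfl⟩ := Submodule.mem_span_singleton.mp hv1
          rcases eq_or_ne cc 0 with h | h
          · simp [h]
          · exfalso
            apply hmem
            have := Submodule.smul_mem _ cc⁻¹ hv2
            rwa [inv_smul_smul₀ h] at this
        have hd : finrank F (Submodule.span F (Aᵀ '' {j : Fin n | (j:ℕ) < K+1}))
            = finrank F (Submodule.span F (Aᵀ '' {j : Fin n | (j:ℕ) < K})) + 1 := by
          rw [himg, Submodule.span_insert]
          have hsum := Submodule.finrank_sup_add_finrank_inf_eq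
            (Submodule.span F {Aᵀ j0})
            (Submodule.span F (Aᵀ '' {j : Fin n | (j:ℕ) < K}))
          rw [hinf, finrank_bot, finrank_span_singleton hm0] at hsum
          omega
        have hcard : (Finset.univ.filter (fun k : Fin n => (k:ℕ) < K ∧
            Aᵀ k ∈ Submodule.span F (Aᵀ '' {j : Fin n | (j:ℕ) < (k:ℕ)}))).card
            ≤ (Finset.univ.filter (fun k : Fin n => (k:ℕ) < K+1 ∧
            Aᵀ k ∈ Submodule.span F (Aᵀ '' {j : Fin n | (j:ℕ) < (k:ℕ)}))).card := by
          apply Finset.card_le_card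
          intro k hk
          simp only [Finset.mem_filter, Finset.mem_univ, true_and] at hk ⊢
          exact ⟨Nat.lt_succ_of_lt hk.1, hk.2⟩
        omega
  have h := key n le_rfl
  have huniv : {j : Fin n | (j:ℕ) < n} = Set.univ := by
    ext j; simp [j.isLt]
  rw [huniv] at h
  have himgu : (Aᵀ '' Set.univ : Set (Fin n → F)) = Set.range Aᵀ := Set.image_univ
  rw [himgu] at h
  rw [Matrix.rank_eq_finrank_span_cols]
  have hfil : (Finset.univ.filter (fun k : Fin n => (k:ℕ) < n ∧
      Aᵀ k ∈ Submodule.span F (Aᵀ '' {j : Fin n | (j:ℕ) < (k:ℕ)})))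
      = (Finset.univ.filter (fun k : Fin n =>
      Aᵀ k ∈ Submodule.span F (Aᵀ '' {j : Fin n | (j:ℕ) < (k:ℕ)}))) := by
    apply Finset.filter_congr
    intro k _
    simp [k.isLt]
  rw [hfil] at h
  exact h


theorem pow_mono_bound {m r d e n : ℕ} (hr : 1 ≤ r) (hrm : r ≤ m) (hde : d ≤ e) (hen : e ≤ n) :
    m ^ d * r ^ (n - d) ≤ m ^ e * r ^ (n - e) := by
  have hnd : n - d = (e - d) + (n - e) := by omega
  rw [hnd, pow_add]
  calc m ^ d * (r ^ (e - d) * r ^ (n - e))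
      = (m ^ d * r ^ (e - d)) * r ^ (n - e) := by ring
    _ ≤ (m ^ d * m ^ (e - d)) * r ^ (n - e) := by
        apply Nat.mul_le_mul_right
        exact Nat.mul_le_mul_left _ (Nat.pow_le_pow_left hrm _)
    _ = m ^ e * r ^ (n - e) := by
        rw [← pow_add]
        congr 2
        omega


theorem geom_bound (n : ℕ) (β bq : ℝ) (h0 : 0 ≤ β) (h1 : β ≤ bq) (h2 : bq < 1) :
    ∑ k : Fin n, β ^ (n - (k:ℕ)) ≤ bq / (1 - bq) := by
  have hbq0 : 0 ≤ bq := le_trans h0 h1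
  have h1mb : 0 < 1 - bq := by linarith
  calc ∑ k : Fin n, β ^ (n - (k:ℕ))
      ≤ ∑ k : Fin n, bq ^ (n - (k:ℕ)) :=
        Finset.sum_le_sum (fun k _ => pow_le_pow_left₀ h0 h1 _)
    _ = ∑ j ∈ Finset.range n, bq ^ (n - j) := Fin.sum_univ_eq_sum_range (fun j => bq ^ (n - j)) n
    _ = ∑ j ∈ Finset.range n, bq ^ ((n - 1 - j) + 1) := by
        apply Finset.sum_congr rfl
        intro j hj
        rw [Finset.mem_range] at hj
        congr 1
        omega
    _ = ∑ j ∈ Finset.range n, bq ^ (j + 1) :=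
        Finset.sum_range_reflect (fun j => bq ^ (j + 1)) n
    _ = bq * ∑ j ∈ Finset.range n, bq ^ j := by
        rw [Finset.mul_sum]
        apply Finset.sum_congr rfl
        intro j _
        rw [pow_succ]
        ring
    _ ≤ bq * (1 / (1 - bq)) := by
        apply mul_le_mul_of_nonneg_left _ hbq0
        rw [le_div_iff₀ h1mb]
        have hgs := geom_sum_mul bq n
        nlinarith [pow_nonneg hbq0 n]
    _ = bq / (1 - bq) := by ring

set_option maxHeartbeats 1000000 in
open scoped Classical in
theorem per_k {F : Type*} [Field F] {m r : ℕ} (φ : Fin m → F) (c : Fin m → Fin r)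
    (hinj : ∀ a b : Fin m, φ a = φ b → c a = c b → a = b)
    (hr : 1 ≤ r) (hrm : r ≤ m) (n : ℕ) (k : Fin n) :
    (Finset.univ.filter (fun ω : Fin n → Fin n → Fin m =>
      (Matrix.of (fun i j => φ (ω i j)))ᵀ k ∈ Submodule.span F
        ((Matrix.of (fun i j => φ (ω i j)))ᵀ '' {j : Fin n | (j:ℕ) < (k:ℕ)}))).card
      ≤ m ^ (n*(n-1)) * (m ^ (k:ℕ) * r ^ (n - (k:ℕ))) := by
  -- the splitting equivalence
  let e : (Fin n → Fin n → Fin m) ≃ ((Fin n → {j : Fin n // j ≠ k} → Fin m) × (Fin n → Fin m)) :=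
  { toFun := fun ω => (fun i j => ω i j.1, fun i => ω i k)
    invFun := fun q => fun i j => if h : j = k then q.2 i else q.1 i ⟨j, h⟩
    left_inv := by
      intro ω
      funext i j
      by_cases h : j = k
      · subst h; simp
      · simp [h]
    right_inv := by
      intro q
      refine Prod.ext ?_ ?_
      · funext i j
        simp [j.2]
      · funext i
        simp }
  have hcond : ∀ q : (Fin n → {j : Fin n // j ≠ k} → Fin m) × (Fin n → Fin m),
      ((Matrix.of (fun i j => φ (e.symm q i j)))ᵀ k ∈ Submodule.span F
        ((Matrix.of (fun i j => φ (e.symm q i j)))ᵀ '' {j : Fin n | (j:ℕ) < (k:ℕ)}))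
      ↔ ((fun i => φ (q.2 i)) ∈ Submodule.span F
        ((fun j : Fin n => if h : j = k then 0 else fun i => φ (q.1 i ⟨j, h⟩)) ''
          {j : Fin n | (j:ℕ) < (k:ℕ)})) := by
    intro q
    have hcol : (Matrix.of (fun i j => φ (e.symm q i j)))ᵀ k = fun i => φ (q.2 i) := by
      funext i
      show φ (e.symm q i k) = _
      simp [e]
    have himg : (Matrix.of (fun i j => φ (e.symm q i j)))ᵀ '' {j : Fin n | (j:ℕ) < (k:ℕ)}
        = (fun j : Fin n => if h : j = k then 0 else fun i => φ (q.1 i ⟨j, h⟩)) ''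
          {j : Fin n | (j:ℕ) < (k:ℕ)} := by
      apply Set.image_congr
      intro j hj
      have hjk : j ≠ k := by
        intro h
        subst h
        exact absurd hj (by simp)
      funext i
      show φ (e.symm q i j) = _
      simp [e, hjk]
    rw [hcol, himg]
  -- rewrite the card as a double sum
  rw [Finset.card_filter]
  rw [← Equiv.sum_comp e.symm]
  rw [Fintype.sum_prod_type]
  have hinner : ∀ q1 : Fin n → {j : Fin n // j ≠ k} → Fin m,
      (∑ q2 : Fin n → Fin m, if (Matrix.of (fun i j => φ (e.symm (q1, q2) i j)))ᵀ k ∈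
          Submodule.span F ((Matrix.of (fun i j => φ (e.symm (q1, q2) i j)))ᵀ ''
            {j : Fin n | (j:ℕ) < (k:ℕ)}) then 1 else 0)
        ≤ m ^ (k:ℕ) * r ^ (n - (k:ℕ)) := by
    intro q1
    have hV : ∀ q2 : Fin n → Fin m, ((Matrix.of (fun i j => φ (e.symm (q1, q2) i j)))ᵀ k ∈
          Submodule.span F ((Matrix.of (fun i j => φ (e.symm (q1, q2) i j)))ᵀ ''
            {j : Fin n | (j:ℕ) < (k:ℕ)}))
        ↔ ((fun i => φ (q2 i)) ∈ Submodule.span F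
        ((fun j : Fin n => if h : j = k then 0 else fun i => φ (q1 i ⟨j, h⟩)) ''
          {j : Fin n | (j:ℕ) < (k:ℕ)})) := fun q2 => hcond (q1, q2)
    calc (∑ q2 : Fin n → Fin m, if (Matrix.of (fun i j => φ (e.symm (q1, q2) i j)))ᵀ k ∈
          Submodule.span F ((Matrix.of (fun i j => φ (e.symm (q1, q2) i j)))ᵀ ''
            {j : Fin n | (j:ℕ) < (k:ℕ)}) then 1 else 0)
        = ∑ q2 : Fin n → Fin m, if (fun i => φ (q2 i)) ∈ Submodule.span F
            ((fun j : Fin n => if h : j = k then 0 else fun i => φ (q1 i ⟨j, h⟩)) ''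
              {j : Fin n | (j:ℕ) < (k:ℕ)}) then 1 else 0 := by
          apply Finset.sum_congr rfl
          intro q2 _
          congr 1
          exact propext (hV q2)
      _ = (Finset.univ.filter (fun q2 : Fin n → Fin m => (fun i => φ (q2 i)) ∈ Submodule.span F
            ((fun j : Fin n => if h : j = k then 0 else fun i => φ (q1 i ⟨j, h⟩)) ''
              {j : Fin n | (j:ℕ) < (k:ℕ)}))).card := (Finset.card_filter _ _).symm
      _ ≤ _ := by
          set V := Submodule.span F
            ((fun j : Fin n => if h : j = k then 0 else fun i => φ (q1 i ⟨j, h⟩)) ''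
              {j : Fin n | (j:ℕ) < (k:ℕ)}) with hVdef
          have hd : finrank F V ≤ (k:ℕ) := by
            have himg2 : ((fun j : Fin n => if h : j = k then 0 else fun i => φ (q1 i ⟨j, h⟩)) ''
                {j : Fin n | (j:ℕ) < (k:ℕ)})
                = ↑((Finset.univ.filter (fun j : Fin n => (j:ℕ) < (k:ℕ))).image
                  (fun j : Fin n => if h : j = k then (0 : Fin n → F) else fun i => φ (q1 i ⟨j, h⟩))) := by
              rw [Finset.coe_image]
              congr 1
              ext j
              simp
            rw [hVdef, himg2]
            refine (finrank_span_finset_le_card _).trans ?_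
            refine (Finset.card_image_le).trans ?_
            rw [← Finset.card_range (k:ℕ)]
            apply Finset.card_le_card_of_injOn (fun j : Fin n => (j:ℕ)) ?_ ?_
            · intro j hj
              simp only [Finset.mem_coe, Finset.mem_filter, Finset.mem_univ, true_and] at hj
              simpa [Finset.mem_range] using hj
            · intro a _ b _ h
              exact Fin.ext h
          refine (count_le' φ c hinj n V).trans ?_
          exact pow_mono_bound hr hrm hd (Nat.le_of_lt k.isLt)
  calc (∑ q1, ∑ q2 : Fin n → Fin m, if (Matrix.of (fun i j => φ (e.symm (q1, q2) i j)))ᵀ k ∈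
          Submodule.span F ((Matrix.of (fun i j => φ (e.symm (q1, q2) i j)))ᵀ ''
            {j : Fin n | (j:ℕ) < (k:ℕ)}) then 1 else 0)
      ≤ ∑ _q1 : Fin n → {j : Fin n // j ≠ k} → Fin m, (m ^ (k:ℕ) * r ^ (n - (k:ℕ))) :=
        Finset.sum_le_sum (fun q1 _ => hinner q1)
    _ = (Fintype.card (Fin n → {j : Fin n // j ≠ k} → Fin m)) * (m ^ (k:ℕ) * r ^ (n - (k:ℕ))) := by
        rw [Finset.sum_const, Finset.card_univ, smul_eq_mul]
    _ = m ^ (n*(n-1)) * (m ^ (k:ℕ) * r ^ (n - (k:ℕ))) := by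
        congr 1
        rw [Fintype.card_fun, Fintype.card_fun, Fintype.card_fin]
        rw [Fintype.card_subtype_compl, Fintype.card_subtype_eq, Fintype.card_fin]
        rw [← pow_mul, Nat.mul_comm]





set_option maxHeartbeats 1000000 in
open scoped Classical in
theorem masterT (n lam p : ℕ) (hp : p.Prime)
    (φ : Fin (lam + 1) → ZMod p) (c : Fin (lam + 1) → Fin (lam / p + 1))
    (hinj : ∀ a b : Fin (lam + 1), φ a = φ b → c a = c b → a = b)
    (bq : ℝ) (hbq : ((lam / p + 1 : ℕ) : ℝ) / ((lam + 1 : ℕ) : ℝ) ≤ bq) (hbq1 : bq < 1) :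
    (∑ ω : Fin n → Fin n → Fin (lam + 1),
        ((n - (Matrix.of fun i j => φ (ω i j)).rank : ℕ) : ℝ))
      / ((lam + 1 : ℕ) : ℝ) ^ (n * n) ≤ bq / (1 - bq) := by
  haveI : Fact p.Prime := ⟨hp⟩
  have hr1 : 1 ≤ lam / p + 1 := Nat.succ_le_succ (Nat.zero_le _)
  have hrm : lam / p + 1 ≤ lam + 1 := Nat.add_le_add_right (Nat.div_le_self lam p) 1
  have main_nat : (∑ ω : Fin n → Fin n → Fin (lam + 1),
        (n - (Matrix.of (fun i j => φ (ω i j))).rank))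
      ≤ ∑ k : Fin n, (lam + 1) ^ (n*(n-1)) * ((lam + 1) ^ (k:ℕ) * (lam / p + 1) ^ (n - (k:ℕ))) := by
    calc (∑ ω : Fin n → Fin n → Fin (lam + 1), (n - (Matrix.of (fun i j => φ (ω i j))).rank))
        ≤ ∑ ω : Fin n → Fin n → Fin (lam + 1),
            (Finset.univ.filter (fun k : Fin n =>
              (Matrix.of (fun i j => φ (ω i j)))ᵀ k ∈ Submodule.span (ZMod p)
                ((Matrix.of (fun i j => φ (ω i j)))ᵀ '' {j : Fin n | (j:ℕ) < (k:ℕ)}))).card := by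
          apply Finset.sum_le_sum
          intro ω _
          have h := rank_lower (Matrix.of (fun i j => φ (ω i j)))
          exact Nat.sub_le_iff_le_add.mpr (by rw [Nat.add_comm]; exact h)
      _ = ∑ ω : Fin n → Fin n → Fin (lam + 1), ∑ k : Fin n,
            (if (Matrix.of (fun i j => φ (ω i j)))ᵀ k ∈ Submodule.span (ZMod p)
                ((Matrix.of (fun i j => φ (ω i j)))ᵀ '' {j : Fin n | (j:ℕ) < (k:ℕ)}) then 1 else 0) := by
          apply Finset.sum_congr rfl
          intro ω _
          exact Finset.card_filter _ _
      _ = ∑ k : Fin n, ∑ ω : Fin n → Fin n → Fin (lam + 1),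
            (if (Matrix.of (fun i j => φ (ω i j)))ᵀ k ∈ Submodule.span (ZMod p)
                ((Matrix.of (fun i j => φ (ω i j)))ᵀ '' {j : Fin n | (j:ℕ) < (k:ℕ)}) then 1 else 0) :=
          Finset.sum_comm
      _ = ∑ k : Fin n, (Finset.univ.filter (fun ω : Fin n → Fin n → Fin (lam + 1) =>
            (Matrix.of (fun i j => φ (ω i j)))ᵀ k ∈ Submodule.span (ZMod p)
              ((Matrix.of (fun i j => φ (ω i j)))ᵀ '' {j : Fin n | (j:ℕ) < (k:ℕ)}))).card := by
          apply Finset.sum_congr rfl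
          intro k _
          exact (Finset.card_filter _ _).symm
      _ ≤ ∑ k : Fin n, (lam + 1) ^ (n*(n-1)) * ((lam + 1) ^ (k:ℕ) * (lam / p + 1) ^ (n - (k:ℕ))) := by
          apply Finset.sum_le_sum
          intro k _
          exact per_k φ c hinj hr1 hrm n k
  have hmR : (0:ℝ) < ((lam + 1 : ℕ):ℝ) := by positivity
  have hmnn : (0:ℝ) < ((lam + 1 : ℕ):ℝ) ^ (n*n) := pow_pos hmR _
  have hβ0 : (0:ℝ) ≤ ((lam / p + 1 : ℕ):ℝ) / ((lam + 1 : ℕ):ℝ) := by positivity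
  rw [div_le_iff₀ hmnn]
  rw [← Nat.cast_sum]
  have hterm : ∀ k : Fin n,
      (((lam + 1 : ℕ):ℝ) ^ (n*(n-1)) * (((lam + 1 : ℕ):ℝ) ^ (k:ℕ) * ((lam / p + 1 : ℕ):ℝ) ^ (n - (k:ℕ))))
      = ((lam + 1 : ℕ):ℝ) ^ (n*n) * ((((lam / p + 1 : ℕ):ℝ) / ((lam + 1 : ℕ):ℝ)) ^ (n - (k:ℕ))) := by
    intro k
    have hk : (k:ℕ) < n := k.isLt
    have hid : ((lam + 1 : ℕ):ℝ) ^ (n*n)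
        = ((lam + 1 : ℕ):ℝ) ^ (n*(n-1)) * ((lam + 1 : ℕ):ℝ) ^ (k:ℕ) * ((lam + 1 : ℕ):ℝ) ^ (n - (k:ℕ)) := by
      rw [← pow_add, ← pow_add]
      congr 1
      obtain ⟨t, rfl⟩ : ∃ t, n = t + 1 :=
        ⟨n - 1, (Nat.succ_pred_eq_of_pos (lt_of_le_of_lt (Nat.zero_le _) hk)).symm⟩
      simp only [Nat.add_sub_cancel]
      have e1 : (k:ℕ) + (t + 1 - (k:ℕ)) = t + 1 :=
        Nat.add_sub_cancel' (Nat.le_of_lt hk)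
      rw [Nat.add_assoc, e1]
      ring
    rw [div_pow, hid]
    have hmk : ((lam + 1 : ℕ):ℝ) ^ (n - (k:ℕ)) ≠ 0 := by positivity
    field_simp
  calc (((∑ ω : Fin n → Fin n → Fin (lam + 1),
          (n - (Matrix.of (fun i j => φ (ω i j))).rank) : ℕ)) : ℝ)
      ≤ ((∑ k : Fin n, (lam + 1) ^ (n*(n-1)) * ((lam + 1) ^ (k:ℕ) * (lam / p + 1) ^ (n - (k:ℕ))) : ℕ) : ℝ) := by
        exact_mod_cast main_nat
    _ = ∑ k : Fin n, (((lam + 1 : ℕ):ℝ) ^ (n*(n-1)) * (((lam + 1 : ℕ):ℝ) ^ (k:ℕ) * ((lam / p + 1 : ℕ):ℝ) ^ (n - (k:ℕ)))) := by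
        push_cast
        rfl
    _ = ∑ k : Fin n, ((lam + 1 : ℕ):ℝ) ^ (n*n) * ((((lam / p + 1 : ℕ):ℝ) / ((lam + 1 : ℕ):ℝ)) ^ (n - (k:ℕ))) := by
        apply Finset.sum_congr rfl
        intro k _
        exact hterm k
    _ = (∑ k : Fin n, ((((lam / p + 1 : ℕ):ℝ) / ((lam + 1 : ℕ):ℝ)) ^ (n - (k:ℕ)))) * ((lam + 1 : ℕ):ℝ) ^ (n*n) := by
        rw [← Finset.mul_sum]
        exact mul_comm _ _
    _ ≤ (bq / (1 - bq)) * ((lam + 1 : ℕ):ℝ) ^ (n*n) := by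
        apply mul_le_mul_of_nonneg_right _ (le_of_lt hmnn)
        exact geom_bound n _ bq hβ0 hbq hbq1

/-- For a random `n×n` matrix with i.i.d. entries uniform on the
`λ+1` contiguous integers `{-⌊λ/2⌋, …, ⌈λ/2⌉}` and a prime `p`, the expected
number of invariant factors divisible by `p` (that is, `n - rank_p`) is at
most 4; and at most 1.18 when `p ≥ λ+1`. -/
theorem stmt_7 (n lam : ℕ) (hlam : 0 < lam) (p : ℕ) (hp : p.Prime) :
    ((∑ ω : Fin n → Fin n → Fin (lam + 1),
        ((n - (Matrix.of fun i j =>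
            (((((ω i j : ℕ) : ℤ) - ((lam / 2 : ℕ) : ℤ)) : ℤ) : ZMod p)).rank : ℕ) : ℝ))
        / ((lam + 1 : ℕ) : ℝ) ^ (n * n) ≤ 4) ∧
    (lam + 1 ≤ p →
      (∑ ω : Fin n → Fin n → Fin (lam + 1),
        ((n - (Matrix.of fun i j =>
            (((((ω i j : ℕ) : ℤ) - ((lam / 2 : ℕ) : ℤ)) : ℤ) : ZMod p)).rank : ℕ) : ℝ))
        / ((lam + 1 : ℕ) : ℝ) ^ (n * n) ≤ 1.18) := by
  have hppos : 0 < p := hp.pos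
  have hp2 : 2 ≤ p := hp.two_le
  have hcmem : ∀ v : Fin (lam + 1), (v : ℕ) / p < lam / p + 1 := by
    intro v
    have h1 : (v : ℕ) ≤ lam := Nat.le_of_lt_succ v.isLt
    have h2 : (v : ℕ) / p ≤ lam / p := Nat.div_le_div_right h1
    exact Nat.lt_succ_of_le h2
  have hinj : ∀ a b : Fin (lam + 1),
      ((((((a : ℕ) : ℤ) - ((lam / 2 : ℕ) : ℤ)) : ℤ) : ZMod p)
        = (((((b : ℕ) : ℤ) - ((lam / 2 : ℕ) : ℤ)) : ℤ) : ZMod p)) →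
      (⟨(a : ℕ) / p, hcmem a⟩ : Fin (lam / p + 1)) = ⟨(b : ℕ) / p, hcmem b⟩ → a = b := by
    intro a b hφab hcab
    have h1 : ((((a : ℕ) : ℤ) - ((lam / 2 : ℕ) : ℤ))) ≡ ((((b : ℕ) : ℤ) - ((lam / 2 : ℕ) : ℤ))) [ZMOD p] :=
      (ZMod.intCast_eq_intCast_iff _ _ _).mp hφab
    have h2 : (((a : ℕ) : ℤ)) ≡ (((b : ℕ) : ℤ)) [ZMOD p] := by
      have := Int.ModEq.add_right ((lam / 2 : ℕ) : ℤ) h1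
      simpa using this
    have h3 : (a : ℕ) % p = (b : ℕ) % p := by
      have h4 : ((a : ℕ) : ℤ) % (p : ℤ) = ((b : ℕ) : ℤ) % (p : ℤ) := h2
      have h5 : (((a : ℕ) % p : ℕ) : ℤ) = (((b : ℕ) % p : ℕ) : ℤ) := by
        push_cast
        exact h4
      exact_mod_cast h5
    have h6 : (a : ℕ) / p = (b : ℕ) / p := congrArg Fin.val hcab
    apply Fin.ext
    calc (a : ℕ) = p * ((a : ℕ) / p) + (a : ℕ) % p := (Nat.div_add_mod _ _).symm
      _ = p * ((b : ℕ) / p) + (b : ℕ) % p := by rw [h3, h6]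
      _ = (b : ℕ) := Nat.div_add_mod _ _
  have hmR : (0:ℝ) < ((lam + 1 : ℕ):ℝ) := by positivity
  constructor
  · have h3r : 3 * (lam / p + 1) ≤ 2 * (lam + 1) := by
      have h1 : lam / p ≤ lam / 2 := Nat.div_le_div_left hp2 (by norm_num)
      generalize hq : lam / p = q at h1 ⊢
      omega
    have hbq : ((lam / p + 1 : ℕ):ℝ) / ((lam + 1 : ℕ):ℝ) ≤ 2/3 := by
      rw [div_le_iff₀ hmR]
      have : (3:ℝ) * ((lam / p + 1 : ℕ):ℝ) ≤ 2 * ((lam + 1 : ℕ):ℝ) := by exact_mod_cast h3r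
      linarith
    have h := masterT n lam p hp
      (fun v => (((((v : ℕ) : ℤ) - ((lam / 2 : ℕ) : ℤ)) : ℤ) : ZMod p))
      (fun v => ⟨(v : ℕ) / p, hcmem v⟩) hinj (2/3) hbq (by norm_num)
    calc _ ≤ (2/3 : ℝ) / (1 - 2/3) := h
      _ ≤ 4 := by norm_num
  · intro hple
    have hrval : lam / p = 0 := Nat.div_eq_of_lt (by omega)
    have hbq : ((lam / p + 1 : ℕ):ℝ) / ((lam + 1 : ℕ):ℝ) ≤ 1/2 := by
      rw [div_le_iff₀ hmR]
      have hm2 : (1:ℝ) ≤ (lam:ℝ) := by exact_mod_cast hlam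
      rw [hrval]
      push_cast
      linarith
    have h := masterT n lam p hp
      (fun v => (((((v : ℕ) : ℤ) - ((lam / 2 : ℕ) : ℤ)) : ℤ) : ZMod p))
      (fun v => ⟨(v : ℕ) / p, hcmem v⟩) hinj (1/2) hbq (by norm_num)
    calc _ ≤ (1/2 : ℝ) / (1 - 1/2) := h
      _ ≤ 1.18 := by norm_num
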